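/- Let r and q be pmfs on a finite product space Ω = V^I, both satisfying the same block-marginal constraints r_{X_c} = q_{X_c} for all c ∈ C, and suppose q(x) = ∏_{c ∈ C} φ_c(x_c) with all φ_c > 0. Then the cross-entropy of r against q equals the entropy of q: −∑_x r(x) log q(x) = −∑_x q(x) log q(x). -/

import Mathlib

lemma local_sum_eq_aux {I V : Type*} [Fintype I] [DecidableEq I] [Fintype V] [DecidableEq V]
    (c : Finset I) (r q f : (I → V) → ℝ) (x₀ : I → V)
    (hf : ∀ x y, (∀ i ∈ c, x i = y i) → f x = f y)
    (hmarg : ∀ x : I → V,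
      (∑ y ∈ Finset.univ.filter (fun y => ∀ i ∈ c, y i = x i), r y) =
        ∑ y ∈ Finset.univ.filter (fun y => ∀ i ∈ c, y i = x i), q y) :
    ∑ x, r x * f x = ∑ x, q x * f x := by
  classical
  set k : (I → V) → (I → V) := fun x i => if i ∈ c then x i else x₀ i with hk
  have hkk : ∀ x, k (k x) = k x := by
    intro x; funext i; by_cases hi : i ∈ c <;> simp [hk, hi]
  have hagree : ∀ x, ∀ i ∈ c, k x i = x i := by intro x i hi; simp [hk, hi]
  have key : ∀ g : (I → V) → ℝ,
      ∑ x, g x * f x = ∑ y, (∑ x ∈ Finset.univ.filter (fun x => k x = y), g x) * f y := by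
    intro g
    rw [← Finset.sum_fiberwise_of_maps_to (fun x _ => Finset.mem_univ (k x))
      (fun x => g x * f x)]
    refine Finset.sum_congr rfl fun y _ => ?_
    rw [Finset.sum_mul]
    refine Finset.sum_congr rfl fun x hx => ?_
    have hxy : k x = y := (Finset.mem_filter.mp hx).2
    rw [← hxy]
    congr 1
    exact hf x (k x) (fun i hi => (hagree x i hi).symm)
  rw [key r, key q]
  refine Finset.sum_congr rfl fun y _ => ?_
  congr 1
  by_cases hy : k y = y
  · have hfilter : Finset.univ.filter (fun x => k x = y) =
        Finset.univ.filter (fun x => ∀ i ∈ c, x i = y i) := by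
      ext x
      simp only [Finset.mem_filter, Finset.mem_univ, true_and]
      constructor
      · intro h i hi; rw [← h]; exact (hagree x i hi).symm
      · intro h
        rw [← hy]
        funext i
        by_cases hi : i ∈ c <;> simp [hk, hi, h]
    rw [hfilter]; exact hmarg y
  · have hempty : Finset.univ.filter (fun x => k x = y) = ∅ := by
      ext x
      simp only [Finset.mem_filter, Finset.mem_univ, true_and, Finset.notMem_empty, iff_false]
      intro h; exact hy (by rw [← h, hkk])
    simp [hempty]

/-- If `r` and `q` have the same block marginals and `q` factors over the blocks
with strictly positive potentials, then the cross-entropy of `r` against `q`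
equals the entropy of `q`. -/
theorem stmt_7 {I V : Type*} [Fintype I] [DecidableEq I] [Fintype V] [DecidableEq V]
    (C : Finset (Finset I))
    (r q : (I → V) → ℝ)
    (hr0 : ∀ x, 0 ≤ r x) (hr1 : ∑ x, r x = 1)
    (hq0 : ∀ x, 0 ≤ q x) (hq1 : ∑ x, q x = 1)
    (φ : Finset I → (I → V) → ℝ)
    (hφpos : ∀ c ∈ C, ∀ x, 0 < φ c x)
    (hφloc : ∀ c ∈ C, ∀ x y : I → V, (∀ i ∈ c, x i = y i) → φ c x = φ c y)
    (hfact : ∀ x, q x = ∏ c ∈ C, φ c x)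
    (hmarg : ∀ c ∈ C, ∀ x : I → V,
      (∑ y ∈ Finset.univ.filter (fun y => ∀ i ∈ c, y i = x i), r y) =
        ∑ y ∈ Finset.univ.filter (fun y => ∀ i ∈ c, y i = x i), q y) :
    (-∑ x, r x * Real.log (q x)) = -∑ x, q x * Real.log (q x) := by
  classical
  have hne : Nonempty (I → V) := by
    by_contra h
    rw [not_nonempty_iff] at h
    rw [Finset.univ_eq_empty, Finset.sum_empty] at hr1
    exact zero_ne_one hr1
  obtain ⟨x₀⟩ := hne
  congr 1
  have hlog : ∀ x, Real.log (q x) = ∑ c ∈ C, Real.log (φ c x) := by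
    intro x; rw [hfact]; exact Real.log_prod (fun c hc => (hφpos c hc x).ne')
  calc ∑ x, r x * Real.log (q x)
      = ∑ c ∈ C, ∑ x, r x * Real.log (φ c x) := by
        simp_rw [hlog, Finset.mul_sum]; rw [Finset.sum_comm]
    _ = ∑ c ∈ C, ∑ x, q x * Real.log (φ c x) := by
        refine Finset.sum_congr rfl fun c hc => ?_
        exact local_sum_eq_aux c r q (fun x => Real.log (φ c x)) x₀
          (fun x y h => congrArg Real.log (hφloc c hc x y h)) (hmarg c hc)
    _ = ∑ x, q x * Real.log (q x) := by
        simp_rw [hlog, Finset.mul_sum]; rw [Finset.sum_comm]
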